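/- Fix β ∈ ℝ^p and m > 0, and suppose that |β·(X_i − X_j)| ≥ m for every ordered pair i ≠ j with Δ_j·1[Y_i > Y_j] = 1. Then for every σ > 0, the smoothing error satisfies |𝓛̂_σ(β) − Ĥ(β)| ≤ exp(−m/σ). -/

import Mathlib

open Finset

/-- The smoothed indicator `S_σ(x) = 1 / (1 + exp (-x/σ))`. -/
noncomputable def smoothInd (σ x : ℝ) : ℝ := 1 / (1 + Real.exp (-x / σ))

/-- Euclidean inner product on `ℝ^p`. -/
noncomputable def dotP {p : ℕ} (β x : Fin p → ℝ) : ℝ := ∑ k, β k * x k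

/-- The partial-rank objective
`Ĥ(β) = (1/(n(n−1))) Σ_{i≠j} Δ_j·1[Y_i > Y_j]·1[β·X_i > β·X_j]`. -/
noncomputable def prObj {n p : ℕ} (Y Δ : Fin n → ℝ) (X : Fin n → Fin p → ℝ)
    (β : Fin p → ℝ) : ℝ :=
  (1 / ((n : ℝ) * ((n : ℝ) - 1))) *
    ∑ q ∈ (Finset.univ : Finset (Fin n)).offDiag,
      Δ q.2 * (if Y q.1 > Y q.2 then (1 : ℝ) else 0) *
        (if dotP β (X q.1) > dotP β (X q.2) then (1 : ℝ) else 0)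

/-- The smoothed partial-rank objective
`𝓛̂_σ(β) = (1/(n(n−1))) Σ_{i≠j} Δ_j·1[Y_i > Y_j]·S_σ(β·(X_i − X_j))`. -/
noncomputable def sprObj {n p : ℕ} (σ : ℝ) (Y Δ : Fin n → ℝ) (X : Fin n → Fin p → ℝ)
    (β : Fin p → ℝ) : ℝ :=
  (1 / ((n : ℝ) * ((n : ℝ) - 1))) *
    ∑ q ∈ (Finset.univ : Finset (Fin n)).offDiag,
      Δ q.2 * (if Y q.1 > Y q.2 then (1 : ℝ) else 0) *
        smoothInd σ (dotP β (X q.1 - X q.2))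

lemma dotP_sub {p : ℕ} (β x y : Fin p → ℝ) :
    dotP β (x - y) = dotP β x - dotP β y := by
  simp [dotP, mul_sub, Finset.sum_sub_distrib]

lemma smoothInd_err {σ m d : ℝ} (hσ : 0 < σ) (hm : 0 < m) (hd : m ≤ |d|) :
    |smoothInd σ d - (if d > 0 then (1 : ℝ) else 0)| ≤ Real.exp (-m / σ) := by
  have hne : d ≠ 0 := by
    intro h; rw [h] at hd; simp at hd; linarith
  rcases lt_or_gt_of_ne hne with hneg | hpos
  · rw [if_neg (not_lt.mpr hneg.le), sub_zero]
    have habs : |d| = -d := abs_of_neg hneg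
    have h1 : Real.exp (m / σ) ≤ Real.exp (-d / σ) := by
      apply Real.exp_le_exp.mpr
      rw [div_le_div_iff_of_pos_right hσ]
      linarith [habs ▸ hd]
    have he : (0:ℝ) < Real.exp (-d / σ) := Real.exp_pos _
    have hSpos : (0:ℝ) < smoothInd σ d := by unfold smoothInd; positivity
    rw [abs_of_pos hSpos]
    have : smoothInd σ d ≤ 1 / Real.exp (-d / σ) := by
      unfold smoothInd
      apply one_div_le_one_div_of_le he; linarith
    calc smoothInd σ d ≤ 1 / Real.exp (-d / σ) := this
      _ = Real.exp (d / σ) := by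
          rw [one_div, ← Real.exp_neg]; congr 1; ring
      _ ≤ Real.exp (-m / σ) := by
          apply Real.exp_le_exp.mpr
          rw [div_le_div_iff_of_pos_right hσ]
          linarith [habs ▸ hd]
  · rw [if_pos hpos]
    have habs : |d| = d := abs_of_pos hpos
    have he : (0:ℝ) < Real.exp (-d / σ) := Real.exp_pos _
    have hden : (0:ℝ) < 1 + Real.exp (-d / σ) := by linarith
    have key : smoothInd σ d - 1 = -(Real.exp (-d / σ) / (1 + Real.exp (-d / σ))) := by
      unfold smoothInd; field_simp; ring
    rw [key, abs_neg, abs_of_pos (by positivity)]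
    calc Real.exp (-d / σ) / (1 + Real.exp (-d / σ)) ≤ Real.exp (-d / σ) / 1 := by
          apply div_le_div_of_nonneg_left he.le one_pos; linarith
      _ = Real.exp (-d / σ) := by ring
      _ ≤ Real.exp (-m / σ) := by
          apply Real.exp_le_exp.mpr
          rw [div_le_div_iff_of_pos_right hσ]
          linarith [habs ▸ hd]

/-- If `|β·(X_i − X_j)| ≥ m > 0` for every ordered pair `i ≠ j` with
`Δ_j·1[Y_i > Y_j] = 1`, then for every `σ > 0` the smoothing error satisfies
`|𝓛̂_σ(β) − Ĥ(β)| ≤ exp (−m/σ)`. -/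
theorem sprObj_error_bound {n p : ℕ} (hn : 2 ≤ n)
    (Y Δ : Fin n → ℝ) (X : Fin n → Fin p → ℝ)
    (hΔ : ∀ i, Δ i = 0 ∨ Δ i = 1) (β : Fin p → ℝ)
    (m : ℝ) (hm : 0 < m)
    (hmargin : ∀ i j : Fin n, i ≠ j →
      Δ j * (if Y i > Y j then (1 : ℝ) else 0) = 1 →
      m ≤ |dotP β (X i - X j)|)
    (σ : ℝ) (hσ : 0 < σ) :
    |sprObj σ Y Δ X β - prObj Y Δ X β| ≤ Real.exp (-m / σ) := by
  set E := Real.exp (-m / σ) with hE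
  have hEpos : 0 < E := Real.exp_pos _
  set c := (1 / ((n : ℝ) * ((n : ℝ) - 1))) with hc
  have hn1 : (1:ℝ) ≤ (n:ℝ) - 1 := by
    have : (2:ℝ) ≤ (n:ℝ) := by exact_mod_cast hn
    linarith
  have hcn : (0:ℝ) < (n : ℝ) * ((n : ℝ) - 1) := by nlinarith
  have hcpos : 0 < c := by positivity
  have hdiff : sprObj σ Y Δ X β - prObj Y Δ X β =
      c * ∑ q ∈ (Finset.univ : Finset (Fin n)).offDiag,
        (Δ q.2 * (if Y q.1 > Y q.2 then (1 : ℝ) else 0) *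
          (smoothInd σ (dotP β (X q.1 - X q.2)) -
            (if dotP β (X q.1) > dotP β (X q.2) then (1 : ℝ) else 0))) := by
    unfold sprObj prObj
    rw [← mul_sub, ← Finset.sum_sub_distrib]
    congr 1
    apply Finset.sum_congr rfl
    intro q _
    ring
  rw [hdiff, abs_mul, abs_of_pos hcpos]
  have hcard : (((Finset.univ : Finset (Fin n)).offDiag.card : ℕ) : ℝ) =
      (n:ℝ) * ((n:ℝ) - 1) := by
    rw [Finset.offDiag_card, Finset.card_univ, Fintype.card_fin]
    have hle : n ≤ n * n := Nat.le_mul_of_pos_left n (by omega)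
    push_cast [hle]
    ring
  have hsum : |∑ q ∈ (Finset.univ : Finset (Fin n)).offDiag,
        (Δ q.2 * (if Y q.1 > Y q.2 then (1 : ℝ) else 0) *
          (smoothInd σ (dotP β (X q.1 - X q.2)) -
            (if dotP β (X q.1) > dotP β (X q.2) then (1 : ℝ) else 0)))| ≤
      ((Finset.univ : Finset (Fin n)).offDiag.card : ℝ) * E := by
    calc |∑ q ∈ (Finset.univ : Finset (Fin n)).offDiag,
        (Δ q.2 * (if Y q.1 > Y q.2 then (1 : ℝ) else 0) *
          (smoothInd σ (dotP β (X q.1 - X q.2)) -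
            (if dotP β (X q.1) > dotP β (X q.2) then (1 : ℝ) else 0)))| ≤
        ∑ q ∈ (Finset.univ : Finset (Fin n)).offDiag,
          |Δ q.2 * (if Y q.1 > Y q.2 then (1 : ℝ) else 0) *
            (smoothInd σ (dotP β (X q.1 - X q.2)) -
              (if dotP β (X q.1) > dotP β (X q.2) then (1 : ℝ) else 0))| :=
        Finset.abs_sum_le_sum_abs _ _
      _ ≤ ∑ _q ∈ (Finset.univ : Finset (Fin n)).offDiag, E := by
          apply Finset.sum_le_sum
          intro q hq
          have hqne : q.1 ≠ q.2 := (Finset.mem_offDiag.mp hq).2.2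
          set w := Δ q.2 * (if Y q.1 > Y q.2 then (1 : ℝ) else 0) with hw
          have hw01 : w = 0 ∨ w = 1 := by
            rcases hΔ q.2 with h | h <;> by_cases hy : Y q.1 > Y q.2 <;>
              simp [hw, h, hy]
          rcases hw01 with h | h
          · rw [h]; simpa using hEpos.le
          · rw [h, one_mul]
            have hmarg := hmargin q.1 q.2 hqne (hw ▸ h)
            have hind : (if dotP β (X q.1) > dotP β (X q.2) then (1 : ℝ) else 0) =
                (if dotP β (X q.1 - X q.2) > 0 then (1 : ℝ) else 0) := by
              rw [dotP_sub]
              congr 1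
              simp [sub_pos]
            rw [hind]
            exact smoothInd_err hσ hm hmarg
      _ = ((Finset.univ : Finset (Fin n)).offDiag.card : ℝ) * E := by
          rw [Finset.sum_const, nsmul_eq_mul]
  calc c * |∑ q ∈ (Finset.univ : Finset (Fin n)).offDiag,
        (Δ q.2 * (if Y q.1 > Y q.2 then (1 : ℝ) else 0) *
          (smoothInd σ (dotP β (X q.1 - X q.2)) -
            (if dotP β (X q.1) > dotP β (X q.2) then (1 : ℝ) else 0)))|
      ≤ c * (((Finset.univ : Finset (Fin n)).offDiag.card : ℝ) * E) :=
        mul_le_mul_of_nonneg_left hsum hcpos.le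
    _ = E := by
        rw [hcard, hc]
        field_simp
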